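/- Given a sequence of vertex sets (S_1,...,S_k) with update dependencies determined by the edge-consistency model, executing a task (v, i) with v ∈ S_i early is safe—i.e., yields the same result as the barrier-synchronized execution—provided all tasks (u, j) with j < i and u adjacent to or equal to v have completed. -/

import Mathlib

/-- Data locations of a data graph: vertex data and edge data. -/
abbrev Loc (V : Type*) := V ⊕ Sym2 V

/-- The read scope of a vertex `v` under edge consistency: `v`, its neighbors,
and its incident edges. -/
def readScope {V : Type*} (G : SimpleGraph V) (v : V) : Set (Loc V) :=
  {l | match l with
    | Sum.inl u => u = v ∨ G.Adj u v
    | Sum.inr e => v ∈ e ∧ e ∈ G.edgeSet}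

/-- The write set of a vertex `v` under edge consistency: `v` itself and its
incident edges. -/
def writeSet {V : Type*} (G : SimpleGraph V) (v : V) : Set (Loc V) :=
  {l | match l with
    | Sum.inl u => u = v
    | Sum.inr e => v ∈ e ∧ e ∈ G.edgeSet}

/-- One barrier round: all vertices of `S` are updated simultaneously, reading
the pre-round state. -/
def RoundStep {V D : Type*} (G : SimpleGraph V) (f : V → (Loc V → D) → (Loc V → D))
    (S : Finset V) (σ σ' : Loc V → D) : Prop :=
  (∀ v ∈ S, ∀ l ∈ writeSet G v, σ' l = f v σ l) ∧
  (∀ l, (∀ v ∈ S, l ∉ writeSet G v) → σ' l = σ l)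

/-- Barrier-synchronized execution of a set schedule `S_1, ..., S_k`: the rounds
are executed in order with a barrier in between; within each round the updated
vertices are pairwise non-adjacent as required by edge consistency. -/
inductive BarrierExec {V D : Type*} (G : SimpleGraph V)
    (f : V → (Loc V → D) → (Loc V → D)) :
    List (Finset V) → (Loc V → D) → (Loc V → D) → Prop
  | nil (σ : Loc V → D) : BarrierExec G f [] σ σ
  | cons {S : Finset V} {rounds : List (Finset V)} {σ σ₁ σ₂ : Loc V → D} :
      (∀ u ∈ S, ∀ v ∈ S, u ≠ v → ¬ G.Adj u v) →
      RoundStep G f S σ σ₁ → BarrierExec G f rounds σ₁ σ₂ →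
      BarrierExec G f (S :: rounds) σ σ₂

/-- The list of all tasks `(i, v)` with `v ∈ S_i` of a set schedule. -/
noncomputable def allTasks {V : Type*} (Ss : List (Finset V)) : List (ℕ × V) :=
  Ss.zipIdx.flatMap (fun p => p.1.toList.map (fun v => (p.2, v)))


section EarlyExecAux

/-! ### Generic lemmas: folding a permuted list with commuting out-of-order pairs -/

lemma EarlyExec.foldl_hoist {α β : Type*} (g : α → β → β) (x : α) : ∀ (P : List α) (s : β),
    (∀ a ∈ P, ∀ s, g x (g a s) = g a (g x s)) →
    P.foldl (fun s t => g t s) (g x s) = g x (P.foldl (fun s t => g t s) s)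
  | [], _, _ => rfl
  | a :: P, s, h => by
    simp only [List.foldl_cons]
    rw [← h a (by simp) s,
      EarlyExec.foldl_hoist g x P (g a s) (fun b hb s => h b (by simp [hb]) s)]

lemma EarlyExec.foldl_perm_comm {α β : Type*} (g : α → β → β) : ∀ (M L : List α), L.Perm M →
    (∀ a b, ([a, b]).Sublist L → ([b, a]).Sublist M → ∀ s, g b (g a s) = g a (g b s)) →
    ∀ s, L.foldl (fun s t => g t s) s = M.foldl (fun s t => g t s) s
  | [], L, hp, _, s => by simp [hp.eq_nil]
  | x :: M', L, hp, h, s => by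
    have hx : x ∈ L := hp.mem_iff.mpr (by simp)
    obtain ⟨P, Q, rfl⟩ := List.append_of_mem hx
    have hcomm : ∀ a ∈ P, ∀ s, g x (g a s) = g a (g x s) := by
      intro a ha s
      by_cases hax : a = x
      · subst hax; rfl
      · refine h a x ?_ ?_ s
        · exact List.Sublist.append (List.singleton_sublist.mpr ha)
            (List.singleton_sublist.mpr (by simp))
        · have haM : a ∈ M' := by
            have := hp.subset (by simp [ha] : a ∈ P ++ x :: Q)
            simpa [hax] using this
          exact (List.singleton_sublist.mpr haM).cons₂ x
    have hperm' : (P ++ Q).Perm M' :=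
      List.Perm.cons_inv (List.perm_middle.symm.trans hp)
    have h' : ∀ a b, ([a, b]).Sublist (P ++ Q) → ([b, a]).Sublist M' →
        ∀ s, g b (g a s) = g a (g b s) := by
      intro a b h1 h2 s
      refine h a b (h1.trans ?_) (h2.trans (List.sublist_cons_self x M')) s
      exact (List.sublist_cons_self x Q).append_left P
    calc (P ++ x :: Q).foldl (fun s t => g t s) s
        = Q.foldl (fun s t => g t s) (g x (P.foldl (fun s t => g t s) s)) := by
          simp [List.foldl_append]
      _ = Q.foldl (fun s t => g t s) (P.foldl (fun s t => g t s) (g x s)) := by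
          rw [EarlyExec.foldl_hoist g x P s hcomm]
      _ = (P ++ Q).foldl (fun s t => g t s) (g x s) := by simp [List.foldl_append]
      _ = M'.foldl (fun s t => g t s) (g x s) :=
          EarlyExec.foldl_perm_comm g M' (P ++ Q) hperm' h' _
      _ = (x :: M').foldl (fun s t => g t s) s := by simp

lemma EarlyExec.indexOf_cons_ne' {α : Type*} [BEq α] [LawfulBEq α] {a b : α} (l : List α)
    (h : b ≠ a) : List.idxOf a (b :: l) = List.idxOf a l + 1 := by
  rw [List.idxOf_cons, beq_false_of_ne h]; rfl

lemma EarlyExec.indexOf_cons_self' {α : Type*} [BEq α] [LawfulBEq α] (a : α) (l : List α) :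
    List.idxOf a (a :: l) = 0 := by
  rw [List.idxOf_cons, beq_self_eq_true]; rfl

lemma EarlyExec.sublist_pair_indexOf {α : Type*} [BEq α] [LawfulBEq α] {a b : α} {L : List α}
    (hs : ([a, b]).Sublist L) (hnd : L.Nodup) : L.idxOf a < L.idxOf b := by
  induction L with
  | nil => simp at hs
  | cons c L' ih =>
    have hnd' : L'.Nodup := (List.nodup_cons.mp hnd).2
    have hcL : c ∉ L' := (List.nodup_cons.mp hnd).1
    cases hs with
    | cons _ h =>
      have haL : a ∈ L' := h.subset (by simp)
      have hbL : b ∈ L' := h.subset (by simp)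
      have hca : c ≠ a := fun e => hcL (e ▸ haL)
      have hcb : c ≠ b := fun e => hcL (e ▸ hbL)
      rw [EarlyExec.indexOf_cons_ne' _ hca, EarlyExec.indexOf_cons_ne' _ hcb]
      exact Nat.succ_lt_succ (ih h hnd')
    | cons_cons _ h =>
      have hbL : b ∈ L' := h.subset (by simp)
      have hab : a ≠ b := fun e => hcL (e ▸ hbL)
      rw [EarlyExec.indexOf_cons_self', EarlyExec.indexOf_cons_ne' _ hab]
      exact Nat.succ_pos _

/-! ### Read/write scope disjointness and commutation of independent updates -/

lemma EarlyExec.write_subset_read {V : Type*} {G : SimpleGraph V} (v : V) :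
    writeSet G v ⊆ readScope G v := by
  intro l hl
  cases l with
  | inl u => exact Or.inl hl
  | inr e => exact hl

lemma EarlyExec.read_write_disj {V : Type*} {G : SimpleGraph V} {u v : V}
    (hne : u ≠ v) (hadj : ¬ G.Adj u v) :
    ∀ l ∈ readScope G u, l ∉ writeSet G v := by
  intro l hr hw
  cases l with
  | inl w =>
    simp only [readScope, Set.mem_setOf_eq] at hr
    simp only [writeSet, Set.mem_setOf_eq] at hw
    subst hw
    rcases hr with h | h
    · exact hne h.symm
    · exact hadj (G.adj_symm h)
  | inr e =>
    simp only [readScope, Set.mem_setOf_eq] at hr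
    simp only [writeSet, Set.mem_setOf_eq] at hw
    have he : e = s(u, v) := (Sym2.mem_and_mem_iff hne).mp ⟨hr.1, hw.1⟩
    subst he
    exact hadj (G.mem_edgeSet.mp hw.2)

section EarlyExecDom
variable {V D : Type*} {G : SimpleGraph V} {f : V → (Loc V → D) → (Loc V → D)}
variable (hreads : ∀ v (σ σ' : Loc V → D), (∀ l ∈ readScope G v, σ l = σ' l) →
      ∀ l ∈ writeSet G v, f v σ l = f v σ' l)
  (hwrites : ∀ v (σ : Loc V → D) (l : Loc V), l ∉ writeSet G v → f v σ l = σ l)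

include hreads hwrites in
lemma EarlyExec.updates_comm {u v : V} (hne : u ≠ v) (hadj : ¬ G.Adj u v) (s : Loc V → D) :
    f v (f u s) = f u (f v s) := by
  have hadj' : ¬ G.Adj v u := fun h => hadj (G.adj_symm h)
  funext l
  by_cases hv : l ∈ writeSet G v
  · have hlu : l ∉ writeSet G u :=
      EarlyExec.read_write_disj hne.symm hadj' l (EarlyExec.write_subset_read v hv)
    rw [hwrites u (f v s) l hlu]
    exact hreads v (f u s) s
      (fun l' hl' => hwrites u s l' (EarlyExec.read_write_disj hne.symm hadj' l' hl')) l hv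
  · rw [hwrites v (f u s) l hv]
    by_cases hu : l ∈ writeSet G u
    · exact hreads u s (f v s)
        (fun l' hl' => (hwrites v s l' (EarlyExec.read_write_disj hne hadj l' hl')).symm) l hu
    · rw [hwrites u s l hu, hwrites u (f v s) l hu, hwrites v s l hv]

include hreads hwrites in
lemma EarlyExec.round_fold {S : Finset V}
    (hpair : ∀ u ∈ S, ∀ v ∈ S, u ≠ v → ¬ G.Adj u v)
    {σ σ₁ : Loc V → D} (hstep : RoundStep G f S σ σ₁) :
    S.toList.foldl (fun s v => f v s) σ = σ₁ := by
  suffices h : ∀ (rest done : List V), done ++ rest = S.toList →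
      ∀ τ : Loc V → D, (∀ v ∈ done, ∀ l ∈ writeSet G v, τ l = f v σ l) →
      (∀ l, (∀ v ∈ done, l ∉ writeSet G v) → τ l = σ l) →
      rest.foldl (fun s v => f v s) τ = σ₁ by
    exact h S.toList [] rfl σ (by simp) (fun l _ => rfl)
  intro rest
  induction rest with
  | nil =>
    intro done hsplit τ h1 h2
    simp only [List.foldl_nil]
    funext l
    by_cases hex : ∃ v ∈ S, l ∈ writeSet G v
    · obtain ⟨v, hvS, hlv⟩ := hex
      have hvdone : v ∈ done := by
        have : v ∈ done ++ ([] : List V) := by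
          rw [hsplit]; exact Finset.mem_toList.mpr hvS
        simpa using this
      rw [h1 v hvdone l hlv, hstep.1 v hvS l hlv]
    · push_neg at hex
      have hds : ∀ v ∈ done, v ∈ S := by
        intro v hv
        have : v ∈ done ++ ([] : List V) := by simp [hv]
        rw [hsplit] at this; exact Finset.mem_toList.mp this
      rw [h2 l (fun v hv => hex v (hds v hv)), hstep.2 l hex]
  | cons w rest ih =>
    intro done hsplit τ h1 h2
    have hnd : (done ++ w :: rest).Nodup := by rw [hsplit]; exact S.nodup_toList
    have hmemS : ∀ v ∈ done ++ w :: rest, v ∈ S := by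
      intro v hv; rw [hsplit] at hv; exact Finset.mem_toList.mp hv
    have hwS : w ∈ S := hmemS w (by simp)
    have hdone : ∀ v ∈ done, v ≠ w ∧ ¬ G.Adj v w := by
      intro v hv
      have hvS : v ∈ S := hmemS v (by simp [hv])
      have hvw : v ≠ w := by
        rintro rfl
        exact (List.disjoint_of_nodup_append hnd) hv (by simp)
      exact ⟨hvw, hpair v hvS w hwS hvw⟩
    simp only [List.foldl_cons]
    apply ih (done ++ [w]) (by simpa using hsplit)
    · intro v hv l hl
      rcases List.mem_append.mp hv with hv | hv
      · obtain ⟨hvw, hadj⟩ := hdone v hv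
        have hlw : l ∉ writeSet G w :=
          EarlyExec.read_write_disj hvw hadj l (EarlyExec.write_subset_read v hl)
        rw [hwrites w τ l hlw]
        exact h1 v hv l hl
      · have hvw : v = w := by simpa using hv
        subst hvw
        refine hreads v τ σ ?_ l hl
        intro l' hl'
        refine h2 l' ?_
        intro u hu
        obtain ⟨huv, hadj⟩ := hdone u hu
        exact EarlyExec.read_write_disj (fun e => huv e.symm) (fun h => hadj (G.adj_symm h)) l' hl'
    · intro l hl
      have hlw : l ∉ writeSet G w := hl w (by simp)
      rw [hwrites w τ l hlw]
      exact h2 l (fun v hv => hl v (by simp [hv]))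

end EarlyExecDom

/-! ### Structure of the canonical task list -/

noncomputable def EarlyExec.tasksFrom {V : Type*} (n : ℕ) (Ss : List (Finset V)) :
    List (ℕ × V) :=
  (Ss.zipIdx n).flatMap (fun p => p.1.toList.map (fun v => (p.2, v)))

lemma EarlyExec.allTasks_eq {V : Type*} (Ss : List (Finset V)) :
    allTasks Ss = EarlyExec.tasksFrom 0 Ss := rfl

lemma EarlyExec.tasksFrom_nil {V : Type*} (n : ℕ) :
    EarlyExec.tasksFrom n ([] : List (Finset V)) = [] := rfl

lemma EarlyExec.tasksFrom_cons {V : Type*} (n : ℕ) (S : Finset V) (Ss : List (Finset V)) :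
    EarlyExec.tasksFrom n (S :: Ss) =
      S.toList.map (fun v => (n, v)) ++ EarlyExec.tasksFrom (n + 1) Ss := by
  simp [EarlyExec.tasksFrom, List.zipIdx_cons]

lemma EarlyExec.tasksFrom_fst_ge {V : Type*} : ∀ {Ss : List (Finset V)} {n : ℕ} {a : ℕ × V},
    a ∈ EarlyExec.tasksFrom n Ss → n ≤ a.1
  | [], n, a, h => by simp [EarlyExec.tasksFrom_nil] at h
  | S :: Ss, n, a, h => by
    rw [EarlyExec.tasksFrom_cons] at h
    rcases List.mem_append.mp h with h | h
    · obtain ⟨v, _, rfl⟩ := List.mem_map.mp h; exact le_refl n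
    · exact Nat.le_of_succ_le (EarlyExec.tasksFrom_fst_ge h)

lemma EarlyExec.tasksFrom_nodup {V : Type*} : ∀ (Ss : List (Finset V)) (n : ℕ),
    (EarlyExec.tasksFrom n Ss).Nodup
  | [], n => by simp [EarlyExec.tasksFrom_nil]
  | S :: Ss, n => by
    rw [EarlyExec.tasksFrom_cons, List.nodup_append]
    refine ⟨S.nodup_toList.map (fun u v h => by simpa using h),
      EarlyExec.tasksFrom_nodup Ss (n + 1), ?_⟩
    intro a ha b hb hab
    obtain ⟨v, _, rfl⟩ := List.mem_map.mp ha
    subst hab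
    have := EarlyExec.tasksFrom_fst_ge hb
    simp at this

lemma EarlyExec.tasksFrom_sorted {V : Type*} : ∀ (Ss : List (Finset V)) (n : ℕ),
    (EarlyExec.tasksFrom n Ss).Pairwise (fun a b => a.1 ≤ b.1)
  | [], n => by simp [EarlyExec.tasksFrom_nil]
  | S :: Ss, n => by
    rw [EarlyExec.tasksFrom_cons, List.pairwise_append]
    refine ⟨?_, EarlyExec.tasksFrom_sorted Ss (n + 1), ?_⟩
    · exact List.pairwise_map.mpr (List.pairwise_of_forall (fun _ _ => le_refl n))
    · intro a ha b hb
      obtain ⟨v, _, rfl⟩ := List.mem_map.mp ha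
      exact Nat.le_of_succ_le (EarlyExec.tasksFrom_fst_ge hb)

lemma EarlyExec.tasksFrom_same_round {V : Type*} : ∀ {Ss : List (Finset V)} {n : ℕ} {a b : ℕ × V},
    a ∈ EarlyExec.tasksFrom n Ss → b ∈ EarlyExec.tasksFrom n Ss → a.1 = b.1 →
    ∃ S ∈ Ss, a.2 ∈ S ∧ b.2 ∈ S
  | [], n, a, b, ha, _, _ => by simp [EarlyExec.tasksFrom_nil] at ha
  | S :: Ss, n, a, b, ha, hb, hab => by
    rw [EarlyExec.tasksFrom_cons] at ha hb
    rcases List.mem_append.mp ha with ha' | ha' <;> rcases List.mem_append.mp hb with hb' | hb'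
    · obtain ⟨v, hv, rfl⟩ := List.mem_map.mp ha'
      obtain ⟨w, hw, rfl⟩ := List.mem_map.mp hb'
      exact ⟨S, by simp, Finset.mem_toList.mp hv, Finset.mem_toList.mp hw⟩
    · obtain ⟨v, hv, rfl⟩ := List.mem_map.mp ha'
      have := EarlyExec.tasksFrom_fst_ge hb'; omega
    · obtain ⟨w, hw, rfl⟩ := List.mem_map.mp hb'
      have := EarlyExec.tasksFrom_fst_ge ha'; omega
    · obtain ⟨T, hT, h⟩ := EarlyExec.tasksFrom_same_round ha' hb' hab
      exact ⟨T, by simp [hT], h⟩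

lemma EarlyExec.barrier_pairwise {V D : Type*} {G : SimpleGraph V}
    {f : V → (Loc V → D) → (Loc V → D)}
    {Ss : List (Finset V)} {σ σf : Loc V → D} (h : BarrierExec G f Ss σ σf) :
    ∀ S ∈ Ss, ∀ u ∈ S, ∀ v ∈ S, u ≠ v → ¬ G.Adj u v := by
  induction h with
  | nil => simp
  | cons hpair _ _ ih =>
    intro T hT
    rcases List.mem_cons.mp hT with rfl | hT
    · exact hpair
    · exact ih T hT

section EarlyExecDom2
variable {V D : Type*} {G : SimpleGraph V} {f : V → (Loc V → D) → (Loc V → D)}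
variable (hreads : ∀ v (σ σ' : Loc V → D), (∀ l ∈ readScope G v, σ l = σ' l) →
      ∀ l ∈ writeSet G v, f v σ l = f v σ' l)
  (hwrites : ∀ v (σ : Loc V → D) (l : Loc V), l ∉ writeSet G v → f v σ l = σ l)

include hreads hwrites in
lemma EarlyExec.barrier_fold {Ss : List (Finset V)} {σ σf : Loc V → D}
    (h : BarrierExec G f Ss σ σf) :
    ∀ n, (EarlyExec.tasksFrom n Ss).foldl (fun s t => f t.2 s) σ = σf := by
  induction h with
  | nil => intro n; simp [EarlyExec.tasksFrom_nil]
  | @cons S rounds σ σ₁ σ₂ hpair hstep _ ih =>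
    intro n
    rw [EarlyExec.tasksFrom_cons, List.foldl_append, List.foldl_map]
    rw [EarlyExec.round_fold hreads hwrites hpair hstep]
    exact ih (n + 1)

end EarlyExecDom2
end EarlyExecAux

/-- Early execution in the set scheduler is safe: executing the tasks `(i, v)`
of a set schedule sequentially in any order that respects the edge-consistency
dependency DAG — task `(j, u)` must come before `(i, v)` whenever `j < i` and
`u = v` or `u` is adjacent to `v` — produces the same final state as the
barrier-synchronized execution of the schedule. -/
theorem set_schedule_early_execution_safe
    {V D : Type*} [DecidableEq V] (G : SimpleGraph V)
    (f : V → (Loc V → D) → (Loc V → D))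
    (hreads : ∀ v (σ σ' : Loc V → D), (∀ l ∈ readScope G v, σ l = σ' l) →
      ∀ l ∈ writeSet G v, f v σ l = f v σ' l)
    (hwrites : ∀ v (σ : Loc V → D) (l : Loc V), l ∉ writeSet G v → f v σ l = σ l)
    (Ss : List (Finset V)) (σ σf : Loc V → D)
    (hexec : BarrierExec G f Ss σ σf)
    (L : List (ℕ × V)) (hperm : L.Perm (allTasks Ss))
    (hlinext : ∀ a b : ℕ × V, a ∈ L → b ∈ L →
      a.1 < b.1 → (a.2 = b.2 ∨ G.Adj a.2 b.2) → L.idxOf a < L.idxOf b) :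
    L.foldl (fun s t => f t.2 s) σ = σf := by
  have hM : (allTasks Ss).foldl (fun s t => f t.2 s) σ = σf := by
    rw [EarlyExec.allTasks_eq]
    exact EarlyExec.barrier_fold hreads hwrites hexec 0
  rw [← hM]
  refine EarlyExec.foldl_perm_comm (fun t s => f t.2 s) (allTasks Ss) L hperm ?_ σ
  intro a b hab hba s
  by_cases hdep : a.2 = b.2 ∨ G.Adj a.2 b.2
  · exfalso
    have hndM : (allTasks Ss).Nodup := by
      rw [EarlyExec.allTasks_eq]; exact EarlyExec.tasksFrom_nodup Ss 0
    have hndL : L.Nodup := hperm.nodup_iff.mpr hndM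
    have haL : a ∈ L := hab.subset (by simp)
    have hbL : b ∈ L := hab.subset (by simp)
    have hidx : L.idxOf a < L.idxOf b := EarlyExec.sublist_pair_indexOf hab hndL
    have hle : b.1 ≤ a.1 := by
      have hpw := List.Pairwise.sublist hba
        (EarlyExec.allTasks_eq Ss ▸ EarlyExec.tasksFrom_sorted Ss 0)
      exact (List.pairwise_cons.mp hpw).1 a (by simp)
    rcases Nat.lt_or_ge b.1 a.1 with hlt | hge
    · have := hlinext b a hbL haL hlt
        (by rcases hdep with h | h
            · exact Or.inl h.symm
            · exact Or.inr (G.adj_symm h))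
      omega
    · have heq : a.1 = b.1 := le_antisymm hge hle
      have haM : a ∈ EarlyExec.tasksFrom 0 Ss := by
        rw [← EarlyExec.allTasks_eq]; exact hperm.subset haL
      have hbM : b ∈ EarlyExec.tasksFrom 0 Ss := by
        rw [← EarlyExec.allTasks_eq]; exact hperm.subset hbL
      obtain ⟨S, hS, haS, hbS⟩ := EarlyExec.tasksFrom_same_round haM hbM heq
      have hne : a ≠ b := fun e => by simp [e] at hidx
      have hne2 : a.2 ≠ b.2 := fun e => hne (Prod.ext heq e)
      rcases hdep with h | h
      · exact hne2 h
      · exact EarlyExec.barrier_pairwise hexec S hS a.2 haS b.2 hbS hne2 h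
  · push_neg at hdep
    exact EarlyExec.updates_comm hreads hwrites hdep.1 hdep.2 s
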